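/- Let f: [0,∞) → ℝ be Lebesgue-measurable and bounded, and suppose L = lim_{T→∞} (1/T)∫₀^T f(t) dt exists. Then lim_{α↓0} α ∫₀^∞ e^{-αt} f(t) dt exists and equals L. -/

import Mathlib

open Filter MeasureTheory Set Real

section aux

variable {f : ℝ → ℝ} {M : ℝ}

lemma my_intOn (hf : Measurable f) (hb : ∀ t, |f t| ≤ M) {s : Set ℝ}
    (hs : volume s ≠ ⊤) : IntegrableOn f s := by
  apply Measure.integrableOn_of_bounded hs hf.aestronglyMeasurable
  exact Eventually.of_forall fun t => hb t

lemma my_intervalInt (hf : Measurable f) (hb : ∀ t, |f t| ≤ M) (a b : ℝ) :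
    IntervalIntegrable f volume a b := by
  rw [intervalIntegrable_iff]
  exact my_intOn hf hb measure_Ioc_lt_top.ne

/-- integrability of `x * exp (-x)` on `Ioi 0` -/
lemma my_xexp_int : IntegrableOn (fun x : ℝ => exp (-x) * x) (Ioi 0) := by
  have h := Real.GammaIntegral_convergent (by norm_num : (0:ℝ) < 2)
  apply h.congr_fun _ measurableSet_Ioi
  intro x hx
  simp only [show (2:ℝ) - 1 = 1 by norm_num, Real.rpow_one]

lemma my_xexp_val : ∫ x in Ioi (0:ℝ), exp (-x) * x = 1 := by
  have h := Real.integral_rpow_mul_exp_neg_mul_Ioi (by norm_num : (0:ℝ) < 2) one_pos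
  rw [Real.Gamma_two] at h
  simp only [one_mul, mul_one, one_div, inv_one, Real.one_rpow] at h
  rw [← h]
  apply setIntegral_congr_fun measurableSet_Ioi
  intro x hx
  simp only [show (2:ℝ) - 1 = 1 by norm_num, Real.rpow_one]
  exact mul_comm _ _

end aux

theorem stmt_7 (f : ℝ → ℝ) (hf : Measurable f) (M : ℝ) (hb : ∀ t, |f t| ≤ M)
    (L : ℝ)
    (hL : Tendsto (fun T : ℝ => (1 / T) * ∫ t in (0:ℝ)..T, f t) atTop (nhds L)) :
    Tendsto (fun α : ℝ => α * ∫ t in Set.Ioi (0:ℝ), Real.exp (-α * t) * f t)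
      (nhdsWithin 0 (Set.Ioi 0)) (nhds L) := by
  have hM : 0 ≤ M := (abs_nonneg _).trans (hb 0)
  set F : ℝ → ℝ := fun T => ∫ t in (0:ℝ)..T, f t with hF
  have hFcont : Continuous F := intervalIntegral.continuous_primitive
    (fun a b => my_intervalInt hf hb a b) 0
  have hFbound : ∀ T : ℝ, 0 ≤ T → |F T| ≤ M * T := by
    intro T hT
    rw [← Real.norm_eq_abs]
    apply intervalIntegral.norm_integral_le_of_norm_le_const (C := M) ?_ |>.trans
    · rw [abs_of_nonneg (by linarith)]; ring_nf; exact le_refl _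
    · intro x _
      exact (hb x)
  -- Key identity via Fubini: for α > 0,
  -- α * ∫ t in Ioi 0, exp (-α t) * f t = ∫ u in Ioi 0, exp (-u) * (α * F (u/α))
  have key : ∀ α : ℝ, 0 < α →
      α * ∫ t in Set.Ioi (0:ℝ), Real.exp (-α * t) * f t
        = ∫ u in Set.Ioi (0:ℝ), Real.exp (-u) * (α * F (u / α)) := by
    intro α hα
    set μ : Measure ℝ := volume.restrict (Ioi (0:ℝ)) with hμ
    set ψ : ℝ × ℝ → ℝ := fun p => if p.2 ≤ p.1 then Real.exp (-α * p.1) * f p.2 else 0 with hψ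
    have hψm : Measurable ψ := by
      apply Measurable.ite (measurableSet_le measurable_snd measurable_fst)
      · exact ((measurable_fst.const_mul (-α)).exp).mul (hf.comp measurable_snd)
      · exact measurable_const
    have hslice : ∀ s : ℝ, (fun t => ψ (s, t))
        = Set.indicator (Iic s) (fun t => Real.exp (-α * s) * f t) := by
      intro s; funext t
      by_cases h : t ≤ s
      · simp [hψ, h, Set.indicator_of_mem (Set.mem_Iic.2 h)]
      · simp [hψ, h, Set.indicator_of_notMem (fun hc => h (Set.mem_Iic.1 hc))]
    have hslice2 : ∀ t : ℝ, (fun s => ψ (s, t))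
        = Set.indicator (Ici t) (fun s => Real.exp (-α * s) * f t) := by
      intro t; funext s
      by_cases h : t ≤ s
      · simp [hψ, h, Set.indicator_of_mem (Set.mem_Ici.2 h)]
      · simp [hψ, h, Set.indicator_of_notMem (fun hc => h (Set.mem_Ici.1 hc))]
    have hrestrict : ∀ s : ℝ, μ.restrict (Iic s) = volume.restrict (Ioc 0 s) := by
      intro s
      rw [hμ, Measure.restrict_restrict measurableSet_Iic]
      congr 1
      rw [Set.inter_comm, Set.Ioi_inter_Iic]
    have hslice_int : ∀ s : ℝ, Integrable (fun t => ψ (s, t)) μ := by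
      intro s
      rw [hslice s, integrable_indicator_iff measurableSet_Iic]
      unfold IntegrableOn
      rw [hrestrict s]
      exact (my_intOn hf hb measure_Ioc_lt_top.ne).const_mul _
    have hsliceval : ∀ s ∈ Ioi (0:ℝ), ∫ t, ψ (s, t) ∂μ = Real.exp (-α * s) * F s := by
      intro s hs
      rw [hslice s, integral_indicator measurableSet_Iic]
      have heq : ∫ t in Iic s, Real.exp (-α * s) * f t ∂μ
          = ∫ t in Ioc 0 s, Real.exp (-α * s) * f t := by
        rw [hrestrict s]
      rw [heq, integral_const_mul]
      congr 1
      simp only [hF]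
      rw [intervalIntegral.integral_of_le (le_of_lt hs)]
    -- integrability on the product
    have hexpax : IntegrableOn (fun x : ℝ => x * Real.exp (-α * x)) (Ioi 0) := by
      have h := integrableOn_rpow_mul_exp_neg_mul_rpow (s := 1) (p := 1) (b := α)
        (by norm_num) one_pos hα
      apply h.congr_fun _ measurableSet_Ioi
      intro x hx
      simp [Real.rpow_one]
    have hprod : Integrable ψ (μ.prod μ) := by
      rw [integrable_prod_iff hψm.aestronglyMeasurable]
      constructor
      · exact Eventually.of_forall hslice_int
      · apply Integrable.mono' (g := fun s : ℝ => M * (s * Real.exp (-α * s)))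
        · exact hexpax.const_mul M
        · exact hψm.aestronglyMeasurable.norm.integral_prod_right'
        · rw [hμ]
          rw [ae_restrict_iff' measurableSet_Ioi]
          apply Eventually.of_forall
          intro s hs
          have h1 : ∀ t, ‖ψ (s, t)‖
              ≤ Set.indicator (Iic s) (fun _ => Real.exp (-α * s) * M) t := by
            intro t
            by_cases h : t ≤ s
            · rw [Set.indicator_of_mem (Set.mem_Iic.2 h)]
              simp only [hψ, if_pos h, norm_mul, Real.norm_eq_abs, Real.abs_exp]
              exact mul_le_mul_of_nonneg_left
                ((Real.norm_eq_abs _ ▸ hb t)) (Real.exp_nonneg _)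
            · rw [Set.indicator_of_notMem (fun hc => h (Set.mem_Iic.1 hc))]
              simp [hψ, h]
          have h2 : ∫ t, ‖ψ (s, t)‖ ∂μ
              ≤ ∫ t, Set.indicator (Iic s) (fun _ => Real.exp (-α * s) * M) t ∂μ := by
            apply integral_mono (hslice_int s).norm _ h1
            rw [integrable_indicator_iff measurableSet_Iic]
            unfold IntegrableOn
            rw [hrestrict s]
            exact integrableOn_const measure_Ioc_lt_top.ne
          have h3 : ∫ t, Set.indicator (Iic s) (fun _ => Real.exp (-α * s) * M) t ∂μ
              = Real.exp (-α * s) * M * s := by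
            rw [integral_indicator measurableSet_Iic]
            have hconst : ∫ t in Iic s, (fun _ : ℝ => Real.exp (-α * s) * M) t ∂μ
                = ∫ _t in Ioc (0:ℝ) s, Real.exp (-α * s) * M := by
              rw [hrestrict s]
            rw [hconst, setIntegral_const, measureReal_def, Real.volume_Ioc, smul_eq_mul,
              ENNReal.toReal_ofReal (by simp only [sub_zero]; exact le_of_lt hs)]
            ring
          rw [Real.norm_eq_abs, abs_of_nonneg (integral_nonneg (fun t => norm_nonneg _))]
          calc ∫ t, ‖ψ (s, t)‖ ∂μ ≤ Real.exp (-α * s) * M * s := h2.trans (le_of_eq h3)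
            _ = M * (s * Real.exp (-α * s)) := by ring
    have hswap : ∫ s, (∫ t, ψ (s, t) ∂μ) ∂μ = ∫ t, (∫ s, ψ (s, t) ∂μ) ∂μ :=
      integral_integral_swap (f := fun s t => ψ (s, t)) hprod
    -- evaluate both sides of hswap
    have hLHS : ∫ s, (∫ t, ψ (s, t) ∂μ) ∂μ = ∫ s in Ioi (0:ℝ), Real.exp (-α * s) * F s := by
      rw [hμ]
      exact setIntegral_congr_fun measurableSet_Ioi hsliceval
    have hexpint : ∀ t : ℝ, 0 < t →
        ∫ s in Ici t, Real.exp (-α * s) = α⁻¹ * Real.exp (-α * t) := by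
      intro t ht
      rw [MeasureTheory.integral_Ici_eq_integral_Ioi]
      have h := integral_comp_mul_left_Ioi (fun x => Real.exp (-x)) t hα
      simp only [smul_eq_mul, integral_exp_neg_Ioi, ← neg_mul] at h
      exact h
    have hRHS : ∫ t, (∫ s, ψ (s, t) ∂μ) ∂μ
        = α⁻¹ * ∫ t in Ioi (0:ℝ), Real.exp (-α * t) * f t := by
      rw [hμ, ← integral_const_mul]
      apply setIntegral_congr_fun measurableSet_Ioi
      intro t ht
      dsimp only
      rw [hslice2 t, integral_indicator measurableSet_Ici]
      have hsub : Ici t ⊆ Ioi (0:ℝ) := fun x hx => Set.mem_Ioi.2 (lt_of_lt_of_le ht hx)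
      rw [Measure.restrict_restrict measurableSet_Ici,
        Set.inter_eq_left.2 hsub]
      rw [integral_mul_const, hexpint t ht]
      ring
    have hswap2 : (∫ s in Ioi (0:ℝ), Real.exp (-α * s) * F s)
        = α⁻¹ * ∫ t in Ioi (0:ℝ), Real.exp (-α * t) * f t :=
      (hLHS.symm.trans hswap).trans hRHS
    have h3 : ∫ u in Ioi (0:ℝ), Real.exp (-u) * (α * F (u / α))
        = α * ∫ u in Ioi (0:ℝ), Real.exp (-u) * F (u / α) := by
      rw [← integral_const_mul]
      apply setIntegral_congr_fun measurableSet_Ioi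
      intro u _
      ring
    have h2 : ∫ s in Ioi (0:ℝ), Real.exp (-α * s) * F s
        = α⁻¹ * ∫ u in Ioi (0:ℝ), Real.exp (-u) * F (u / α) := by
      have h := integral_comp_mul_left_Ioi (fun x => Real.exp (-x) * F (x / α)) 0 hα
      simp only [mul_zero, smul_eq_mul] at h
      rw [← h]
      apply setIntegral_congr_fun measurableSet_Ioi
      intro x _
      simp only [neg_mul, mul_div_cancel_left₀ _ (ne_of_gt hα)]
    have hswap2 : (∫ s in Ioi (0:ℝ), Real.exp (-α * s) * F s)
        = α⁻¹ * ∫ t in Ioi (0:ℝ), Real.exp (-α * t) * f t :=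
      (hLHS.symm.trans hswap).trans hRHS
    have hfin : ∫ u in Ioi (0:ℝ), Real.exp (-u) * F (u / α)
        = α * ∫ s in Ioi (0:ℝ), Real.exp (-α * s) * F s := by
      rw [h2]
      field_simp
    rw [h3, hfin, hswap2]
    field_simp
    rfl
  -- final DCT
  set l := nhdsWithin (0:ℝ) (Set.Ioi 0) with hl
  have hev : ∀ᶠ α in l, α ∈ Set.Ioi (0:ℝ) := eventually_mem_nhdsWithin
  have hDCT : Tendsto (fun α : ℝ => ∫ u in Set.Ioi (0:ℝ), Real.exp (-u) * (α * F (u / α)))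
      l (nhds L) := by
    have hval : ∫ u in Set.Ioi (0:ℝ), Real.exp (-u) * (u * L) = L := by
      rw [show (fun u : ℝ => Real.exp (-u) * (u * L)) = fun u => (Real.exp (-u) * u) * L by
        funext u; ring]
      rw [integral_mul_const, my_xexp_val, one_mul]
    have h := tendsto_integral_filter_of_dominated_convergence
      (μ := volume.restrict (Ioi (0:ℝ)))
      (F := fun (α : ℝ) (u : ℝ) => Real.exp (-u) * (α * F (u / α)))
      (f := fun u => Real.exp (-u) * (u * L))
      (bound := fun u => Real.exp (-u) * (M * u))
      (Eventually.of_forall (fun α => by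
        apply Continuous.aestronglyMeasurable
        exact (Real.continuous_exp.comp continuous_neg).mul
          (continuous_const.mul (hFcont.comp (continuous_id.div_const α)))))
      (hev.mono (fun α hα => by
        rw [ae_restrict_iff' measurableSet_Ioi]
        apply Eventually.of_forall
        intro u hu
        have hu0 : (0:ℝ) < u := hu
        have hαpos : (0:ℝ) < α := hα
        have hF1 : |F (u / α)| ≤ M * (u / α) := hFbound _ (by positivity)
        rw [Real.norm_eq_abs, abs_mul, abs_mul, Real.abs_exp, abs_of_pos hαpos]
        calc Real.exp (-u) * (α * |F (u / α)|)
            ≤ Real.exp (-u) * (α * (M * (u / α))) := by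
              apply mul_le_mul_of_nonneg_left _ (Real.exp_nonneg _)
              exact mul_le_mul_of_nonneg_left hF1 hαpos.le
          _ = Real.exp (-u) * (M * u) := by
              field_simp))
      (by
        have := my_xexp_int.const_mul M
        apply this.congr
        apply Eventually.of_forall
        intro u
        ring)
      (by
        rw [ae_restrict_iff' measurableSet_Ioi]
        apply Eventually.of_forall
        intro u hu
        have hu0 : (0:ℝ) < u := hu
        have h1 : Tendsto (fun α : ℝ => u / α) l atTop := by
          have := Tendsto.const_mul_atTop hu0 tendsto_inv_nhdsGT_zero
          apply this.congr
          intro α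
          rw [div_eq_mul_inv]
        have h2 : Tendsto (fun α : ℝ => (1 / (u / α)) * F (u / α)) l (nhds L) := hL.comp h1
        have h3 : Tendsto (fun α : ℝ => Real.exp (-u) * (u * ((1 / (u / α)) * F (u / α))))
            l (nhds (Real.exp (-u) * (u * L))) :=
          (tendsto_const_nhds.mul (tendsto_const_nhds.mul h2))
        apply h3.congr'
        apply hev.mono
        intro α hα
        have hαpos : (0:ℝ) < α := hα
        field_simp)
    exact hval ▸ h
  apply hDCT.congr'
  apply hev.mono
  intro α hα
  exact (key α hα).symm
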